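/- arXiv:2101.11763 — 5 statements merged into one kernel-verified Lean document; each statement's English description precedes it below -/
import Mathlib

section
/- Let μ > 0 and let (s_n, s_t) ∈ ℝ × ℝ² with s_t ≠ 0. Define λ₁ = -μ s_n - ‖s_t‖, λ₂ = -s_n + μ‖s_t‖, ξ₁ = -(1/(1+μ²))·(μ, s_t/‖s_t‖), ξ₂ = (1/(1+μ²))·(-1, μ s_t/‖s_t‖). Then the Euclidean projection of (s_n, s_t) onto the friction cone F = {(r_n, r_t) : -μ r_n ≥ ‖r_t‖} equals max{0, λ₁}·ξ₁ + max{0, λ₂}·ξ₂. -/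
open scoped RealInnerProductSpace Pointwise Classical Matrix

set_option maxHeartbeats 1000000

noncomputable section

abbrev E2 := EuclideanSpace ℝ (Fin 2)

abbrev V := WithLp 2 (ℝ × E2)

/-- The Coulomb friction cone `F = {(r_n, r_t) : -μ r_n ≥ ‖r_t‖}`. -/
def frictionCone (μ : ℝ) : Set V := {r | ‖r.ofLp.2‖ ≤ -μ * r.ofLp.1}

/-- `F* = {(v_n, v_t) : -v_n ≥ μ ‖v_t‖}`. -/
def frictionDual (μ : ℝ) : Set V := {v | μ * ‖v.ofLp.2‖ ≤ -v.ofLp.1}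

/-- The dual cone of a set in a real inner product space. -/
def dualCone {H : Type*} [NormedAddCommGroup H] [InnerProductSpace ℝ H]
    (C : Set H) : Set H := {s | ∀ x ∈ C, 0 ≤ ⟪s, x⟫}

/-- Pair constructor for `V`. -/
def pr (a : ℝ) (b : E2) : V := WithLp.toLp 2 (a, b)

/-- `y` is the metric projection of `x` onto `S`. -/
def IsProjOn {H : Type*} [NormedAddCommGroup H] [InnerProductSpace ℝ H]
    (S : Set H) (x y : H) : Prop := y ∈ S ∧ ∀ z ∈ S, ‖x - y‖ ≤ ‖x - z‖

lemma V_ext' {x y : V} (h1 : x.ofLp.1 = y.ofLp.1) (h2 : x.ofLp.2 = y.ofLp.2) : x = y := WithLp.ofLp_injective 2 (Prod.ext h1 h2)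

lemma inner_V (x y : V) : ⟪x, y⟫ = x.ofLp.1 * y.ofLp.1 + ⟪x.ofLp.2, y.ofLp.2⟫ := by
  rw [WithLp.prod_inner_apply]; simp [RCLike.inner_apply]; exact mul_comm _ _

lemma norm_sq_V (x : V) : ‖x‖^2 = x.ofLp.1^2 + ‖x.ofLp.2‖^2 := by
  rw [WithLp.prod_norm_sq_eq_of_L2, Real.norm_eq_abs, sq_abs]; rfl

theorem proj_frictionCone_formula (μ : ℝ) (hμ : 0 < μ) (s : V) (hst : s.ofLp.2 ≠ 0) :
    let lam1 : ℝ := -μ * s.ofLp.1 - ‖s.ofLp.2‖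
    let lam2 : ℝ := -s.ofLp.1 + μ * ‖s.ofLp.2‖
    let xi1 : V := -(1 / (1 + μ ^ 2)) • (WithLp.toLp 2 (μ, ‖s.ofLp.2‖⁻¹ • s.ofLp.2) : V)
    let xi2 : V := (1 / (1 + μ ^ 2)) • (WithLp.toLp 2 (-1, μ • (‖s.ofLp.2‖⁻¹ • s.ofLp.2)) : V)
    ∀ y : V, IsProjOn (frictionCone μ) s y ↔
      y = max 0 lam1 • xi1 + max 0 lam2 • xi2 := by
  intro lam1 lam2 xi1 xi2 y
  have ha : (0:ℝ) < ‖s.ofLp.2‖ := norm_pos_iff.mpr hst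
  have hc : (0:ℝ) < 1 + μ^2 := by positivity
  set u : E2 := ‖s.ofLp.2‖⁻¹ • s.ofLp.2 with hu_def
  have hu : ‖u‖ = 1 := by
    rw [hu_def, norm_smul, Real.norm_eq_abs, abs_of_pos (inv_pos.mpr ha)]
    field_simp
  have hs2 : s.ofLp.2 = ‖s.ofLp.2‖ • u := by
    rw [hu_def, smul_smul, mul_inv_cancel₀ (ne_of_gt ha), one_smul]
  set m1 : ℝ := max 0 lam1 with hm1_def
  set m2 : ℝ := max 0 lam2 with hm2_def
  set y0 : V := m1 • xi1 + m2 • xi2 with hy0_def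
  -- components of y0
  have hy01 : y0.ofLp.1 = (1/(1+μ^2)) * (-(μ*m1) - m2) := by
    show m1 * (-(1 / (1 + μ ^ 2)) * μ) + m2 * ((1 / (1 + μ ^ 2)) * (-1)) = _
    ring
  have hy02 : y0.ofLp.2 = ((1/(1+μ^2)) * (μ*m2 - m1)) • u := by
    show m1 • (-(1 / (1 + μ ^ 2)) • u) + m2 • ((1 / (1 + μ ^ 2)) • (μ • u)) = _
    module
  -- the three KKT facts
  have key : y0 ∈ frictionCone μ ∧ μ * ‖(s - y0).ofLp.2‖ ≤ (s - y0).ofLp.1 ∧ ⟪s - y0, y0⟫ = 0 := by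
    have hsub1 : (s - y0).ofLp.1 = s.ofLp.1 - y0.ofLp.1 := rfl
    have hsub2 : (s - y0).ofLp.2 = s.ofLp.2 - y0.ofLp.2 := rfl
    rcases le_or_gt lam2 0 with h2 | h2
    · -- y0 = 0, s in polar cone
      have hl2 : μ * ‖s.ofLp.2‖ ≤ s.ofLp.1 := by simp only [lam2] at h2; linarith
      have hl1 : lam1 ≤ 0 := by
        have : 0 < s.ofLp.1 := lt_of_lt_of_le (by positivity) hl2
        simp only [lam1]; nlinarith
      have hm1 : m1 = 0 := max_eq_left hl1
      have hm2 : m2 = 0 := max_eq_left h2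
      have hy0z : y0 = 0 := by
        refine V_ext' ?_ ?_
        · rw [hy01, hm1, hm2]; show _ = (0:ℝ); ring
        · rw [hy02, hm1, hm2]; show _ = (0:E2); rw [mul_sub]; simp
      refine ⟨?_, ?_, ?_⟩
      · show ‖y0.ofLp.2‖ ≤ -μ * y0.ofLp.1
        rw [hy0z]; show ‖(0:E2)‖ ≤ -μ * (0:ℝ); simp
      · rw [hy0z, sub_zero]; exact hl2
      · rw [hy0z]; simp
    · rcases lt_or_ge lam1 0 with h1 | h1
      · -- boundary case
        have hm1 : m1 = 0 := max_eq_left h1.le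
        have hm2 : m2 = lam2 := max_eq_right h2.le
        have hy01' : y0.ofLp.1 = -((1/(1+μ^2)) * lam2) := by rw [hy01, hm1, hm2]; ring
        have hy02' : y0.ofLp.2 = ((1/(1+μ^2)) * (μ * lam2)) • u := by
          rw [hy02, hm1, hm2]; ring_nf
        have hw1 : (s - y0).ofLp.1 = (1/(1+μ^2)) * (μ * (-lam1)) := by
          rw [hsub1, hy01']; simp only [lam1, lam2]; field_simp; ring
        have hw2 : (s - y0).ofLp.2 = ((1/(1+μ^2)) * (-lam1)) • u := by
          rw [hsub2, hy02', hs2, ← sub_smul]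
          congr 1
          simp only [lam1, lam2]; field_simp; ring
        refine ⟨?_, ?_, ?_⟩
        · show ‖y0.ofLp.2‖ ≤ -μ * y0.ofLp.1
          rw [hy02', hy01', norm_smul, hu, Real.norm_eq_abs,
            abs_of_nonneg (mul_nonneg (by positivity) (mul_nonneg hμ.le h2.le))]
          ring_nf
          linarith
        · rw [hw1, hw2, norm_smul, hu, Real.norm_eq_abs,
            abs_of_nonneg (mul_nonneg (by positivity) (by linarith : (0:ℝ) ≤ -lam1))]
          ring_nf
          linarith
        · rw [inner_V, hw1, hw2, hy01', hy02', real_inner_smul_left,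
            real_inner_smul_right, real_inner_self_eq_norm_sq, hu]
          ring
      · -- interior case: y0 = s
        have hl2 : ‖s.ofLp.2‖ ≤ -μ * s.ofLp.1 := by simp only [lam1] at h1; linarith
        have hys : y0 = s := by
          have hm1 : m1 = lam1 := max_eq_right h1
          have hm2 : m2 = lam2 := max_eq_right h2.le
          refine V_ext' ?_ ?_
          · rw [hy01, hm1, hm2]; simp only [lam1, lam2]; field_simp; ring
          · rw [hy02, hm1, hm2]
            rw [hs2]
            congr 1
            simp only [lam1, lam2]; field_simp; ring
        refine ⟨?_, ?_, ?_⟩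
        · show ‖y0.ofLp.2‖ ≤ -μ * y0.ofLp.1
          rw [hys]; exact hl2
        · rw [hys]; simp
        · rw [hys]; simp
  -- variational inequality: the residual lies in the polar cone
  have hpolar : ∀ z ∈ frictionCone μ, ⟪s - y0, z⟫ ≤ 0 := by
    intro z hz
    have hz' : ‖z.ofLp.2‖ ≤ -μ * z.ofLp.1 := hz
    have hk := key.2.1
    have hle := real_inner_le_norm (s - y0).ofLp.2 z.ofLp.2
    have hn1 : (0:ℝ) ≤ ‖(s - y0).ofLp.2‖ := norm_nonneg _
    have hn2 : (0:ℝ) ≤ ‖z.ofLp.2‖ := norm_nonneg _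
    have hC : z.ofLp.1 ≤ 0 := by nlinarith
    rw [inner_V]
    nlinarith [mul_le_mul_of_nonneg_left hz' hn1,
      mul_nonneg (sub_nonneg.2 hk) (neg_nonneg.2 hC)]
  -- y0 is a projection
  have hproj : IsProjOn (frictionCone μ) s y0 := by
    refine ⟨key.1, fun z hz => ?_⟩
    have hip : ⟪s - y0, z - y0⟫ ≤ 0 := by
      rw [inner_sub_right, key.2.2, sub_zero]; exact hpolar z hz
    have hsz : s - z = (s - y0) - (z - y0) := by abel
    have hexp : ‖s - z‖^2 = ‖s - y0‖^2 - 2*⟪s - y0, z - y0⟫ + ‖z - y0‖^2 := by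
      rw [hsz]; exact norm_sub_sq_real _ _
    have hsq : ‖s - y0‖^2 ≤ ‖s - z‖^2 := by
      have := sq_nonneg ‖z - y0‖
      linarith
    exact (pow_le_pow_iff_left₀ (norm_nonneg _) (norm_nonneg _) two_ne_zero).mp hsq
  constructor
  · intro h
    have e1 : ‖s - y‖ ≤ ‖s - y0‖ := h.2 y0 key.1
    have e2 : ‖s - y0‖ ≤ ‖s - y‖ := hproj.2 y h.1
    set m : V := (1/2 : ℝ) • (y + y0) with hm_def
    have hm : m ∈ frictionCone μ := by
      show ‖m.ofLp.2‖ ≤ -μ * m.ofLp.1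
      have hmem1 : ‖y.ofLp.2‖ ≤ -μ * y.ofLp.1 := h.1
      have hmem2 : ‖y0.ofLp.2‖ ≤ -μ * y0.ofLp.1 := key.1
      have h2' : m.ofLp.2 = (1/2:ℝ) • (y.ofLp.2 + y0.ofLp.2) := rfl
      have h1' : m.ofLp.1 = (1/2:ℝ) * (y.ofLp.1 + y0.ofLp.1) := rfl
      rw [h2', h1', norm_smul, Real.norm_eq_abs, abs_of_nonneg (by norm_num : (0:ℝ) ≤ 1/2)]
      have hna := norm_add_le y.ofLp.2 y0.ofLp.2
      linarith
    have e3 : ‖s - y‖ ≤ ‖s - m‖ := h.2 m hm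
    have hpar := parallelogram_law_with_norm ℝ (s - y) (s - y0)
    have hab : (s - y) + (s - y0) = (2:ℝ) • (s - m) := by
      rw [hm_def]; module
    have hab2 : (s - y) - (s - y0) = y0 - y := by abel
    rw [hab, hab2, norm_smul, Real.norm_eq_abs] at hpar
    have h2abs : |(2:ℝ)| = 2 := by norm_num
    rw [h2abs] at hpar
    have ed : ‖s - y0‖ = ‖s - y‖ := le_antisymm e2 e1
    have e4 : ‖s - y‖^2 ≤ ‖s - m‖^2 := pow_le_pow_left₀ (norm_nonneg _) e3 2
    ring_nf at hpar
    have hb2 : ‖y0 - y‖^2 = 0 := by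
      rw [ed] at hpar
      nlinarith [sq_nonneg ‖y0 - y‖]
    have hzero : ‖y0 - y‖ = 0 := pow_eq_zero_iff two_ne_zero |>.mp hb2
    have : y0 - y = 0 := norm_eq_zero.mp hzero
    have : y0 = y := by rwa [sub_eq_zero] at this
    exact this.symm
  · intro h; rw [h]; exact hproj
end
end

section
/- Let μ > 0 and (s_n, s_t) ∈ ℝ × ℝ² with s_t ≠ 0, -μ s_n < ‖s_t‖, and -s_n + μ‖s_t‖ > 0. Then Π_F(s_n, s_t) = (λ₂/(1+μ²))·(-1, μ s_t/‖s_t‖) where λ₂ = -s_n + μ‖s_t‖, and this point lies on the boundary of F, i.e. satisfies -μ r_n = ‖r_t‖. -/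
open scoped RealInnerProductSpace Pointwise Classical Matrix

noncomputable section

/-- Variational characterization suffices for projection and uniqueness. -/
lemma proj_char {H : Type*} [NormedAddCommGroup H] [InnerProductSpace ℝ H]
    {S : Set H} {x y : H} (hy : y ∈ S) (h : ∀ z ∈ S, ⟪x - y, z - y⟫ ≤ 0) :
    ∀ z : H, IsProjOn S x z ↔ z = y := by
  have expand : ∀ z : H, ‖x - z‖ ^ 2
      = ‖x - y‖ ^ 2 - 2 * ⟪x - y, z - y⟫ + ‖z - y‖ ^ 2 := by
    intro z
    have hz : x - z = (x - y) - (z - y) := by abel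
    rw [hz, norm_sub_sq_real]
  intro z
  constructor
  · rintro ⟨hzS, hzmin⟩
    have h1 : ‖x - z‖ ≤ ‖x - y‖ := hzmin y hy
    have h2 : ‖x - z‖ ^ 2 ≤ ‖x - y‖ ^ 2 := pow_le_pow_left₀ (norm_nonneg _) h1 2
    have h3 : ‖z - y‖ ^ 2 ≤ 0 := by nlinarith [expand z, h z hzS]
    have h4 : ‖z - y‖ = 0 := by nlinarith [norm_nonneg (z - y)]
    exact sub_eq_zero.mp (norm_eq_zero.mp h4)
  · rintro rfl
    refine ⟨hy, fun w hw => ?_⟩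
    have h2 : ‖x - z‖ ^ 2 ≤ ‖x - w‖ ^ 2 := by
      nlinarith [expand w, h w hw, sq_nonneg ‖w - z‖, expand z]
    exact le_of_pow_le_pow_left₀ two_ne_zero (norm_nonneg _) h2

theorem proj_frictionCone_boundary (μ : ℝ) (hμ : 0 < μ) (s : V) (hst : s.ofLp.2 ≠ 0)
    (h1 : -μ * s.ofLp.1 < ‖s.ofLp.2‖) (h2 : 0 < -s.ofLp.1 + μ * ‖s.ofLp.2‖) :
    let lam2 : ℝ := -s.ofLp.1 + μ * ‖s.ofLp.2‖
    let y : V := (lam2 / (1 + μ ^ 2)) • (WithLp.toLp 2 (-1, μ • (‖s.ofLp.2‖⁻¹ • s.ofLp.2)) : V)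
    (∀ z : V, IsProjOn (frictionCone μ) s z ↔ z = y) ∧ -μ * y.ofLp.1 = ‖y.ofLp.2‖ := by
  intro lam2 y
  set n : ℝ := ‖s.ofLp.2‖ with hn
  have hn0 : 0 < n := norm_pos_iff.mpr hst
  have hden : (0:ℝ) < 1 + μ ^ 2 := by positivity
  set c : ℝ := lam2 / (1 + μ ^ 2) with hc
  have hc0 : 0 < c := div_pos h2 hden
  set u : E2 := ‖s.ofLp.2‖⁻¹ • s.ofLp.2 with hu
  have hun : ‖u‖ = 1 := by
    rw [hu, norm_smul, norm_inv, norm_norm, ← hn, inv_mul_cancel₀ hn0.ne']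
  have hy1 : y.ofLp.1 = -c := by show c * (-1) = -c; ring
  have hy2 : y.ofLp.2 = (c * μ) • u := by
    show c • μ • u = (c * μ) • u
    rw [smul_smul]
  have hny2 : ‖y.ofLp.2‖ = c * μ := by
    rw [hy2, norm_smul, hun, mul_one, Real.norm_eq_abs, abs_of_pos (by positivity)]
  have hbd : -μ * y.ofLp.1 = ‖y.ofLp.2‖ := by rw [hy1, hny2]; ring
  have hyF : y ∈ frictionCone μ := le_of_eq hbd.symm
  set d : ℝ := (μ * s.ofLp.1 + n) / (1 + μ ^ 2) with hd
  have hd0 : 0 < d := div_pos (by linarith) hden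
  have hs1 : s.ofLp.1 - y.ofLp.1 = μ * d := by
    rw [hy1, hc, hd, hn]; simp only [lam2]; field_simp; ring
  have hs2 : s.ofLp.2 - y.ofLp.2 = d • u := by
    rw [hy2, hu]
    rw [smul_smul, ← hn]
    have : s.ofLp.2 = (n * n⁻¹) • s.ofLp.2 := by
      rw [mul_inv_cancel₀ hn0.ne', one_smul]
    nth_rewrite 1 [this]
    rw [← sub_smul, mul_comm n n⁻¹, ← mul_smul]
    congr 1
    rw [hc, hd, hn]; simp only [lam2]; field_simp
    ring
  have huy2 : ⟪u, y.ofLp.2⟫ = c * μ := by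
    rw [hy2, real_inner_smul_right, real_inner_self_eq_norm_sq, hun]
    ring
  refine ⟨proj_char hyF fun z hz => ?_, hbd⟩
  have hzF : ‖z.ofLp.2‖ ≤ -μ * z.ofLp.1 := hz
  have hinner : ⟪s - y, z - y⟫
      = (s.ofLp.1 - y.ofLp.1) * (z.ofLp.1 - y.ofLp.1) + ⟪s.ofLp.2 - y.ofLp.2, z.ofLp.2 - y.ofLp.2⟫ := by
    rw [WithLp.prod_inner_apply]
    norm_num [RCLike.inner_apply]
    ring
  have hCS : ⟪u, z.ofLp.2⟫ ≤ ‖z.ofLp.2‖ := by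
    calc ⟪u, z.ofLp.2⟫ ≤ ‖u‖ * ‖z.ofLp.2‖ := real_inner_le_norm u z.ofLp.2
      _ = ‖z.ofLp.2‖ := by rw [hun, one_mul]
  rw [hinner, hs1, hs2, real_inner_smul_left, inner_sub_right, huy2, hy1]
  have : μ * d * (z.ofLp.1 - -c) + d * (⟪u, z.ofLp.2⟫ - c * μ)
      = d * (μ * z.ofLp.1 + ⟪u, z.ofLp.2⟫) := by ring
  rw [this]
  have : μ * z.ofLp.1 + ⟪u, z.ofLp.2⟫ ≤ 0 := by linarith
  exact mul_nonpos_of_nonneg_of_nonpos hd0.le this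
end
end

section
/- Let μ > 0, g ∈ ℝ, Δu_t ∈ ℝ², g-hat ∈ ℝ, r_n ∈ ℝ, r_t ∈ ℝ². The Coulomb friction conditions { -μ r_n ≥ ‖r_t‖, g-hat ≥ 0, ⟨r_t, Δu_t⟩ - r_n·(g-hat + μ‖Δu_t‖) = 0 } hold if and only if the cone complementarity condition holds: the vector (-g-hat - μ‖Δu_t‖, Δu_t) lies in F* = {(v_n,v_t) : -v_n ≥ μ‖v_t‖}, the vector (r_n, r_t) lies in F = {(r_n,r_t) : -μ r_n ≥ ‖r_t‖}, and their inner product ⟨(-g-hat - μ‖Δu_t‖, Δu_t), (r_n, r_t)⟩ = 0. -/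
open scoped RealInnerProductSpace Pointwise Classical Matrix

noncomputable section

theorem coulomb_iff_cone_complementarity (μ : ℝ) (hμ : 0 < μ)
    (ghat : ℝ) (Δut : E2) (rn : ℝ) (rt : E2) :
    (-μ * rn ≥ ‖rt‖ ∧ ghat ≥ 0 ∧ ⟪rt, Δut⟫ - rn * (ghat + μ * ‖Δut‖) = 0) ↔
      (pr (-ghat - μ * ‖Δut‖) Δut ∈ frictionDual μ ∧
        pr rn rt ∈ frictionCone μ ∧
        ⟪pr (-ghat - μ * ‖Δut‖) Δut, pr rn rt⟫ = 0) := by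
  have hinner : ⟪pr (-ghat - μ * ‖Δut‖) Δut, pr rn rt⟫ =
      (-ghat - μ * ‖Δut‖) * rn + ⟪Δut, rt⟫ := by
    simpa [pr, mul_comm] using WithLp.prod_inner_apply (𝕜 := ℝ)
      (pr (-ghat - μ * ‖Δut‖) Δut) (pr rn rt)
  have hsym : ⟪Δut, rt⟫ = ⟪rt, Δut⟫ := real_inner_comm _ _
  constructor
  · rintro ⟨h1, h2, h3⟩
    refine ⟨?_, h1, ?_⟩
    · simp only [frictionDual, Set.mem_setOf_eq, pr]
      linarith
    · rw [hinner, hsym]; linarith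
  · rintro ⟨h1, h2, h3⟩
    rw [hinner, hsym] at h3
    simp only [frictionDual, Set.mem_setOf_eq, pr] at h1
    exact ⟨h2, by linarith, by linarith⟩
end
end

section
/- Let μ > 0, K ∈ ℝ^{d×d} symmetric positive definite, p ∈ ℝ^d, and for j = 1,…,c let g̃_j ∈ ℝ, t_{nj} ∈ ℝ^d, T_{tj} ∈ ℝ^{d×2}. Suppose Δu ∈ ℝ^d and r_j = (r_{nj}, r_{tj}) ∈ ℝ × ℝ² for each j satisfy: (i) K Δu - p = Σ_j (t_{nj} r_{nj} + T_{tj} r_{tj}); (ii) for each j, (-g̃_j + t_{nj}ᵀΔu, T_{tj}ᵀΔu) ∈ F*, (r_{nj}, r_{tj}) ∈ F, and their inner product vanishes. Then Δu is a global minimizer of the convex function Δu ↦ (1/2)ΔuᵀKΔu - pᵀΔu + Σ_j δ_{F*}(-g̃_j + t_{nj}ᵀΔu, T_{tj}ᵀΔu). -/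
open scoped RealInnerProductSpace Pointwise Classical Matrix

noncomputable section

lemma cone_inner_nonneg (μ : ℝ) (hμ : 0 < μ) (r v : V)
    (hr : r ∈ frictionCone μ) (hv : v ∈ frictionDual μ) : 0 ≤ ⟪r, v⟫ := by
  have h1 : ‖r.ofLp.2‖ ≤ -μ * r.ofLp.1 := hr
  have h2 : μ * ‖v.ofLp.2‖ ≤ -v.ofLp.1 := hv
  have h3 : |⟪r.ofLp.2, v.ofLp.2⟫| ≤ ‖r.ofLp.2‖ * ‖v.ofLp.2‖ := abs_real_inner_le_norm _ _
  have h4 : -(‖r.ofLp.2‖ * ‖v.ofLp.2‖) ≤ ⟪r.ofLp.2, v.ofLp.2⟫ := neg_le_of_abs_le h3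
  have hinner : ⟪r, v⟫ = r.ofLp.1 * v.ofLp.1 + ⟪r.ofLp.2, v.ofLp.2⟫ := by
    rw [WithLp.prod_inner_apply]; simp [RCLike.inner_apply]; ring
  rw [hinner]
  have hr1 : r.ofLp.1 ≤ 0 := by nlinarith [norm_nonneg r.ofLp.2]
  have hv1 : v.ofLp.1 ≤ 0 := by nlinarith [norm_nonneg v.ofLp.2]
  have hmul : ‖r.ofLp.2‖ * (μ * ‖v.ofLp.2‖) ≤ (-μ * r.ofLp.1) * (-v.ofLp.1) :=
    mul_le_mul h1 h2 (by positivity) (by nlinarith [norm_nonneg r.ofLp.2])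
  nlinarith [norm_nonneg r.ofLp.2, norm_nonneg v.ofLp.2]

theorem complementarity_implies_minimizer (μ : ℝ) (hμ : 0 < μ)
    (d c : ℕ) (K : Matrix (Fin d) (Fin d) ℝ) (hsym : K.IsSymm) (hpd : K.PosDef)
    (p : Fin d → ℝ) (gt : Fin c → ℝ) (tn : Fin c → Fin d → ℝ)
    (Tt : Fin c → Matrix (Fin d) (Fin 2) ℝ)
    (Δu : Fin d → ℝ) (rn : Fin c → ℝ) (rt : Fin c → E2)
    (vec : Fin c → (Fin d → ℝ) → V)
    (hvec : ∀ j u, vec j u = pr (-gt j + tn j ⬝ᵥ u) (WithLp.toLp 2 ((Tt j)ᵀ.mulVec u)))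
    (J : (Fin d → ℝ) → EReal)
    (hJ : ∀ u, J u = (((1 / 2) * (K.mulVec u ⬝ᵥ u) - p ⬝ᵥ u : ℝ) : EReal)
        + ∑ j, (if vec j u ∈ frictionDual μ then (0 : EReal) else ⊤))
    (heq : K.mulVec Δu - p = ∑ j, (rn j • tn j + (Tt j).mulVec (rt j)))
    (hcomp : ∀ j, vec j Δu ∈ frictionDual μ ∧
        pr (rn j) (rt j) ∈ frictionCone μ ∧
        ⟪pr (rn j) (rt j), vec j Δu⟫ = 0) :
    ∀ u, J Δu ≤ J u := by
  intro u
  have hΔfin : ∑ j, (if vec j Δu ∈ frictionDual μ then (0 : EReal) else ⊤) = 0 := by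
    apply Finset.sum_eq_zero; intro j _
    simp [(hcomp j).1]
  by_cases hu : ∀ j, vec j u ∈ frictionDual μ
  · have hufin : ∑ j, (if vec j u ∈ frictionDual μ then (0 : EReal) else ⊤) = 0 := by
      apply Finset.sum_eq_zero; intro j _
      simp [hu j]
    rw [hJ, hJ, hΔfin, hufin, add_zero, add_zero, EReal.coe_le_coe_iff]
    -- real inequality
    set w : Fin d → ℝ := u - Δu with hw
    -- inner products with vec
    have hip : ∀ (j : Fin c) (x : Fin d → ℝ), ⟪pr (rn j) (rt j), vec j x⟫
        = rn j * (-gt j + tn j ⬝ᵥ x) + (Tt j).mulVec (rt j) ⬝ᵥ x := by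
      intro j x
      rw [hvec, WithLp.prod_inner_apply]
      simp only [pr, WithLp.ofLp_toLp, RCLike.inner_apply, starRingEnd_apply, star_trivial]
      congr 1
      · ring
      rw [PiLp.inner_apply]
      simp only [RCLike.inner_apply, starRingEnd_apply, star_trivial]
      show ((Tt j)ᵀ *ᵥ x) ⬝ᵥ (rt j).ofLp = _
      rw [dotProduct_comm, Matrix.dotProduct_mulVec, Matrix.vecMul_transpose]
    have hnn : ∀ j : Fin c, 0 ≤ ⟪pr (rn j) (rt j), vec j u⟫ := fun j =>
      cone_inner_nonneg μ hμ _ _ (hcomp j).2.1 (hu j)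
    have hgrad : 0 ≤ (K.mulVec Δu - p) ⬝ᵥ w := by
      have hsd : (∑ j, (rn j • tn j + (Tt j).mulVec (rt j))) ⬝ᵥ w
          = ∑ j, (rn j • tn j + (Tt j).mulVec (rt j)) ⬝ᵥ w := by
        simp only [dotProduct, Finset.sum_apply, Finset.sum_mul]
        rw [Finset.sum_comm]
      have hsum : (K.mulVec Δu - p) ⬝ᵥ w = ∑ j, ⟪pr (rn j) (rt j), vec j u⟫ := by
        rw [heq, hsd]
        apply Finset.sum_congr rfl
        intro j _
        rw [hip j u, add_dotProduct, smul_dotProduct]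
        have h0 := (hcomp j).2.2
        rw [hip j Δu] at h0
        have hd : tn j ⬝ᵥ w = tn j ⬝ᵥ u - tn j ⬝ᵥ Δu := by
          simp [hw, dotProduct_sub]
        have hd2 : (Tt j).mulVec (rt j) ⬝ᵥ w
            = (Tt j).mulVec (rt j) ⬝ᵥ u - (Tt j).mulVec (rt j) ⬝ᵥ Δu := by
          simp [hw, dotProduct_sub]
        rw [hd, hd2]
        simp only [smul_eq_mul]
        nlinarith [h0]
      rw [hsum]
      exact Finset.sum_nonneg fun j _ => hnn j
    -- symmetry and positive semidefiniteness
    have hKsym : ∀ x y : Fin d → ℝ, K.mulVec x ⬝ᵥ y = K.mulVec y ⬝ᵥ x := by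
      intro x y
      rw [dotProduct_comm, Matrix.dotProduct_mulVec, ← Matrix.vecMul_transpose, hsym]
    have hpsd : 0 ≤ K.mulVec w ⬝ᵥ w := by
      have := hpd.posSemidef.dotProduct_mulVec_nonneg w
      simpa [dotProduct_comm] using this
    have hexp : K.mulVec u ⬝ᵥ u
        = K.mulVec Δu ⬝ᵥ Δu + 2 * (K.mulVec Δu ⬝ᵥ w) + K.mulVec w ⬝ᵥ w := by
      have hu' : u = Δu + w := by simp [hw]
      rw [hu']
      simp only [Matrix.mulVec_add, add_dotProduct, dotProduct_add]
      linear_combination hKsym w Δu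
    have hpw : p ⬝ᵥ u = p ⬝ᵥ Δu + p ⬝ᵥ w := by
      have hu' : u = Δu + w := by simp [hw]
      rw [hu', dotProduct_add]
    rw [hexp, hpw]
    have hg : 0 ≤ K.mulVec Δu ⬝ᵥ w - p ⬝ᵥ w := by
      have : (K.mulVec Δu - p) ⬝ᵥ w = K.mulVec Δu ⬝ᵥ w - p ⬝ᵥ w := by
        simp [sub_dotProduct]
      linarith [hgrad, this ▸ hgrad]
    linarith
  · push_neg at hu
    obtain ⟨j, hj⟩ := hu
    have htop : ∑ j, (if vec j u ∈ frictionDual μ then (0 : EReal) else ⊤) = ⊤ := by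
      refine top_le_iff.mp ?_
      calc (⊤ : EReal) = (if vec j u ∈ frictionDual μ then (0 : EReal) else ⊤) := by
            simp [hj]
        _ ≤ _ := Finset.single_le_sum (f := fun i => if vec i u ∈ frictionDual μ then (0 : EReal) else ⊤)
            (fun i _ => by by_cases h : vec i u ∈ frictionDual μ <;> simp [h]) (Finset.mem_univ j)
    rw [hJ u, htop, EReal.coe_add_top]
    exact le_top
end
end

section
/- Let μ > 0 and let r = (r_n, r_t) ∈ F and v = (v_n, v_t) ∈ F* with ⟨r, v⟩ = 0, r ≠ 0 and v ≠ 0. Then -μ r_n = ‖r_t‖ > 0, -v_n = μ‖v_t‖ > 0, and there exists α > 0 such that v_t = -α r_t. -/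
open scoped RealInnerProductSpace Pointwise Classical Matrix

noncomputable section

theorem nonzero_complementary_pair (μ : ℝ) (hμ : 0 < μ)
    (r v : V) (hr : r ∈ frictionCone μ) (hv : v ∈ frictionDual μ)
    (hperp : ⟪r, v⟫ = 0) (hr0 : r ≠ 0) (hv0 : v ≠ 0) :
    (-μ * r.ofLp.1 = ‖r.ofLp.2‖ ∧ 0 < ‖r.ofLp.2‖) ∧ (-v.ofLp.1 = μ * ‖v.ofLp.2‖ ∧ 0 < ‖v.ofLp.2‖) ∧
      ∃ α : ℝ, 0 < α ∧ v.ofLp.2 = -α • r.ofLp.2 := by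
  have hr' : ‖r.ofLp.2‖ ≤ -μ * r.ofLp.1 := hr
  have hv' : μ * ‖v.ofLp.2‖ ≤ -v.ofLp.1 := hv
  have hkey : r.ofLp.1 * v.ofLp.1 + ⟪r.ofLp.2, v.ofLp.2⟫ = 0 := by
    have := hperp
    rw [WithLp.prod_inner_apply] at this
    simp [RCLike.inner_apply] at this ⊢; linarith
  have hr1 : r.ofLp.1 < 0 := by
    rcases lt_or_eq_of_le (by nlinarith [norm_nonneg r.ofLp.2] : r.ofLp.1 ≤ 0) with h | h
    · exact h
    · exfalso; apply hr0
      have h2 : r.ofLp.2 = 0 := by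
        have h3 : ‖r.ofLp.2‖ ≤ 0 := by nlinarith
        simpa using le_antisymm h3 (norm_nonneg _)
      apply WithLp.ofLp_injective 2; simp at h2; apply Prod.ext <;> simp [← h, h2]
  have hv1 : v.ofLp.1 < 0 := by
    rcases lt_or_eq_of_le (by nlinarith [norm_nonneg v.ofLp.2] : v.ofLp.1 ≤ 0) with h | h
    · exact h
    · exfalso; apply hv0
      have h2 : v.ofLp.2 = 0 := by
        have h3 : ‖v.ofLp.2‖ ≤ 0 := by nlinarith
        simpa using le_antisymm h3 (norm_nonneg _)
      apply WithLp.ofLp_injective 2; simp at h2; apply Prod.ext <;> simp [← h, h2]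
  have hcs : -(‖r.ofLp.2‖ * ‖v.ofLp.2‖) ≤ ⟪r.ofLp.2, v.ofLp.2⟫ := neg_le_of_abs_le (abs_real_inner_le_norm r.ofLp.2 v.ofLp.2)
  have hprod : ‖r.ofLp.2‖ * ‖v.ofLp.2‖ ≤ (-μ * r.ofLp.1) * (-v.ofLp.1 / μ) := by
    apply mul_le_mul hr' _ (norm_nonneg _) (by nlinarith)
    rw [le_div_iff₀ hμ]; linarith [hv']
  have heq : ‖r.ofLp.2‖ * ‖v.ofLp.2‖ = r.ofLp.1 * v.ofLp.1 := by
    have : (-μ * r.ofLp.1) * (-v.ofLp.1 / μ) = r.ofLp.1 * v.ofLp.1 := by field_simp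
    nlinarith
  have hrv2 : ⟪r.ofLp.2, v.ofLp.2⟫ = -(‖r.ofLp.2‖ * ‖v.ofLp.2‖) := by nlinarith
  have hr2pos : 0 < ‖r.ofLp.2‖ := by
    rcases (norm_nonneg r.ofLp.2).lt_or_eq with h | h
    · exact h
    · nlinarith [mul_pos (neg_pos.2 hr1) (neg_pos.2 hv1), norm_nonneg v.ofLp.2]
  have hv2pos : 0 < ‖v.ofLp.2‖ := by
    rcases (norm_nonneg v.ofLp.2).lt_or_eq with h | h
    · exact h
    · nlinarith [mul_pos (neg_pos.2 hr1) (neg_pos.2 hv1), norm_nonneg r.ofLp.2]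
  refine ⟨⟨?_, hr2pos⟩, ⟨?_, hv2pos⟩, ?_⟩
  · nlinarith
  · nlinarith
  · have hdiv : ⟪r.ofLp.2, v.ofLp.2⟫ / (‖r.ofLp.2‖ * ‖v.ofLp.2‖) = -1 := by
      rw [hrv2]; field_simp
    obtain ⟨hne, s, hs, hv2⟩ := (real_inner_div_norm_mul_norm_eq_neg_one_iff r.ofLp.2 v.ofLp.2).1 hdiv
    exact ⟨-s, by linarith, by rw [hv2]; module⟩
end
end
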